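/- For every x ∈ ℝ^n, the number 1 is an eigenvalue of (dF/dx)(x) of algebraic multiplicity 1 (equivalently, since the matrix is diagonalizable over ℝ, the eigenspace {w ∈ ℝ^n : (dF/dx)(x) w = w} is one-dimensional), and every eigenvalue λ ∈ ℂ of (dF/dx)(x) with λ ≠ 1 satisfies |λ| < 1. -/

import Mathlib

open Finset Matrix

lemma re_eq_abs_imp {z : ℂ} (h : z.re = ‖z‖) : z = (‖z‖ : ℂ) := by
  have h2 : z.re * z.re + z.im * z.im = ‖z‖ ^ 2 := by
    rw [Complex.sq_norm, Complex.normSq_apply]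
  rw [← h, sq] at h2
  have him2 : z.im * z.im = 0 := by linarith
  have him : z.im = 0 := mul_self_eq_zero.mp him2
  apply Complex.ext <;> simp [h, him]

lemma pf_stochastic (n : ℕ) (hn : 0 < n) (A : Matrix (Fin n) (Fin n) ℝ)
    (hpos : ∀ i j, 0 < A i j) (hrow : ∀ i, ∑ j, A i j = 1) :
    (Module.finrank ℝ
        (Module.End.eigenspace (Matrix.mulVecLin A) (1 : ℝ)) = 1) ∧
      (∀ lam : ℂ, lam ≠ 1 →
        (∃ v : Fin n → ℂ, v ≠ 0 ∧
          (A.map (fun r => (r : ℂ))).mulVec v = lam • v) →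
        ‖lam‖ < 1) := by
  have i₀ : Fin n := ⟨0, hn⟩
  constructor
  · -- eigenspace of 1 is span of constant vector
    have hone : (fun _ : Fin n => (1:ℝ)) ≠ 0 := by
      intro h
      exact one_ne_zero (congrFun h i₀)
    have heq : Module.End.eigenspace (Matrix.mulVecLin A) (1 : ℝ)
        = Submodule.span ℝ {fun _ : Fin n => (1:ℝ)} := by
      apply le_antisymm
      · intro v hv
        rw [Module.End.mem_eigenspace_iff, one_smul] at hv
        have hv' : ∀ i, ∑ k, A i k * v k = v i := by
          intro i
          have := congrFun hv i
          simpa [Matrix.mulVecLin_apply, Matrix.mulVec, dotProduct] using this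
        obtain ⟨i0, -, hmax⟩ := Finset.exists_max_image Finset.univ v ⟨i₀, Finset.mem_univ _⟩
        have hconst : ∀ k, v k = v i0 := by
          have hsum0 : ∑ k, A i0 k * (v i0 - v k) = 0 := by
            have : ∑ k, A i0 k * (v i0 - v k)
                = (∑ k, A i0 k) * v i0 - ∑ k, A i0 k * v k := by
              rw [Finset.sum_mul]
              rw [← Finset.sum_sub_distrib]
              exact Finset.sum_congr rfl fun k _ => by ring
            rw [this, hrow, hv' i0]; ring
          intro k
          have hterm := (Finset.sum_eq_zero_iff_of_nonneg
            (fun k _ => mul_nonneg (hpos i0 k).le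
              (sub_nonneg.mpr (hmax k (Finset.mem_univ k))))).mp hsum0 k (Finset.mem_univ k)
          have := mul_eq_zero.mp hterm
          rcases this with h | h
          · exact absurd h (hpos i0 k).ne'
          · linarith [sub_eq_zero.mp h]
        have : v = v i0 • (fun _ : Fin n => (1:ℝ)) := by
          funext k; simp [hconst k]
        rw [this]
        exact Submodule.smul_mem _ _ (Submodule.mem_span_singleton_self _)
      · rw [Submodule.span_le, Set.singleton_subset_iff]
        rw [SetLike.mem_coe, Module.End.mem_eigenspace_iff, one_smul]
        funext i
        simp [Matrix.mulVecLin_apply, Matrix.mulVec, dotProduct, hrow i]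
    rw [heq]
    exact finrank_span_singleton hone
  · rintro lam hlam ⟨v, hv0, hev⟩
    obtain ⟨i0, -, hmax⟩ := Finset.exists_max_image Finset.univ (fun k => ‖v k‖)
      ⟨i₀, Finset.mem_univ _⟩
    set M := ‖v i0‖ with hM
    have hMpos : 0 < M := by
      obtain ⟨k, hk⟩ := Function.ne_iff.mp hv0
      calc (0:ℝ) < ‖v k‖ := by simpa using hk
        _ ≤ M := hmax k (Finset.mem_univ k)
    have hev' : ∀ i, ∑ k, (A i k : ℂ) * v k = lam * v i := by
      intro i
      have := congrFun hev i
      simpa [Matrix.mulVec, dotProduct, Matrix.map_apply] using this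
    -- triangle bound
    have htri : ∀ i, ‖lam * v i‖ ≤ ∑ k, A i k * ‖v k‖ := by
      intro i
      rw [← hev' i]
      refine le_trans (norm_sum_le _ _) (le_of_eq ?_)
      exact Finset.sum_congr rfl fun k _ => by
        rw [norm_mul, Complex.norm_real, Real.norm_eq_abs, abs_of_pos (hpos i k)]
    have hsumM : ∑ k, A i0 k * ‖v k‖ ≤ M := by
      calc ∑ k, A i0 k * ‖v k‖ ≤ ∑ k, A i0 k * M :=
            Finset.sum_le_sum fun k _ =>
              mul_le_mul_of_nonneg_left (hmax k (Finset.mem_univ k)) (hpos i0 k).le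
        _ = M := by rw [← Finset.sum_mul, hrow, one_mul]
    have hle : ‖lam‖ ≤ 1 := by
      have h1 : ‖lam‖ * M ≤ M := by
        calc ‖lam‖ * M = ‖lam * v i0‖ := by rw [norm_mul]
          _ ≤ ∑ k, A i0 k * ‖v k‖ := htri i0
          _ ≤ M := hsumM
      nlinarith
    rcases lt_or_eq_of_le hle with h | h1
    · exact h
    exfalso
    -- |lam| = 1 case : derive lam = 1
    have habs1 : ‖lam‖ = 1 := h1
    have hMeq : ‖lam * v i0‖ = M := by rw [norm_mul, habs1, one_mul]
    have hsandwich : ∑ k, A i0 k * ‖v k‖ = M :=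
      le_antisymm hsumM (by rw [← hMeq]; exact htri i0)
    -- all |v k| = M
    have habsall : ∀ k, ‖v k‖ = M := by
      have hsum0 : ∑ k, A i0 k * (M - ‖v k‖) = 0 := by
        have : ∑ k, A i0 k * (M - ‖v k‖)
            = (∑ k, A i0 k) * M - ∑ k, A i0 k * ‖v k‖ := by
          rw [Finset.sum_mul, ← Finset.sum_sub_distrib]
          exact Finset.sum_congr rfl fun k _ => by ring
        rw [this, hrow, hsandwich]; ring
      intro k
      have hterm := (Finset.sum_eq_zero_iff_of_nonneg
        (fun k _ => mul_nonneg (hpos i0 k).le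
          (sub_nonneg.mpr (hmax k (Finset.mem_univ k))))).mp hsum0 k (Finset.mem_univ k)
      rcases mul_eq_zero.mp hterm with h | h
      · exact absurd h (hpos i0 k).ne'
      · linarith [sub_eq_zero.mp h]
    -- triangle equality : all v k aligned
    set s : ℂ := lam * v i0 with hs
    have hsabs : ‖s‖ = M := hMeq
    have hsne : s ≠ 0 := by
      intro h; rw [h] at hsabs; simp at hsabs; exact hMpos.ne' hsabs.symm
    set u : ℂ := (starRingEnd ℂ) s / (‖s‖ : ℂ) with hu
    have huabs : ‖u‖ = 1 := by
      rw [hu, norm_div, Complex.norm_conj, Complex.norm_real, norm_norm,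
        div_self (hsabs ▸ hMpos).ne']
    have hune : u ≠ 0 := by
      intro h; rw [h] at huabs; simp at huabs
    have hus : u * s = (M : ℂ) := by
      rw [hu, div_mul_eq_mul_div, mul_comm ((starRingEnd ℂ) s) s, Complex.mul_conj,
        Complex.normSq_eq_norm_sq, hsabs]
      rw [sq]
      push_cast
      rw [mul_div_assoc, div_self (Complex.ofReal_ne_zero.mpr hMpos.ne'), mul_one]
    have hre_sum : ∑ k, (u * ((A i0 k : ℂ) * v k)).re = M := by
      rw [← Complex.re_sum, ← Finset.mul_sum, hev' i0, ← hs, hus, Complex.ofReal_re]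
    have habsz : ∀ k, ‖u * ((A i0 k : ℂ) * v k)‖ = A i0 k * M := by
      intro k
      rw [norm_mul, huabs, one_mul, norm_mul, Complex.norm_real, Real.norm_eq_abs,
        abs_of_pos (hpos i0 k), habsall k]
    have hterm_le : ∀ k, (u * ((A i0 k : ℂ) * v k)).re ≤ A i0 k * M := by
      intro k
      calc (u * ((A i0 k : ℂ) * v k)).re ≤ ‖u * ((A i0 k : ℂ) * v k)‖ :=
            Complex.re_le_norm _
        _ = A i0 k * M := habsz k
    have heq_terms : ∀ k, (u * ((A i0 k : ℂ) * v k)).re = A i0 k * M := by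
      have hsum0 : ∑ k, (A i0 k * M - (u * ((A i0 k : ℂ) * v k)).re) = 0 := by
        rw [Finset.sum_sub_distrib, hre_sum, ← Finset.sum_mul, hrow, one_mul]
        ring
      intro k
      have := (Finset.sum_eq_zero_iff_of_nonneg
        (fun k _ => sub_nonneg.mpr (hterm_le k))).mp hsum0 k (Finset.mem_univ k)
      linarith [sub_eq_zero.mp this]
    have hvconst : ∀ k, v k = (M : ℂ) / u := by
      intro k
      have hz : u * ((A i0 k : ℂ) * v k) = ((A i0 k * M : ℝ) : ℂ) := by
        have h3 := re_eq_abs_imp (z := u * ((A i0 k : ℂ) * v k))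
          (by rw [habsz k]; exact heq_terms k)
        rw [h3, habsz k]
      have hAne : ((A i0 k : ℝ) : ℂ) ≠ 0 := Complex.ofReal_ne_zero.mpr (hpos i0 k).ne'
      have h6 : u * ((A i0 k : ℂ) * v k) = u * ((A i0 k : ℂ) * ((M : ℂ) / u)) := by
        rw [hz]; push_cast; field_simp
      exact mul_left_cancel₀ hAne (mul_left_cancel₀ hune h6)
    have hcne : (M : ℂ) / u ≠ 0 :=
      div_ne_zero (Complex.ofReal_ne_zero.mpr hMpos.ne') hune
    have hfin : lam * ((M : ℂ) / u) = (M : ℂ) / u := by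
      have h4 := hev' i0
      rw [hvconst i0] at h4
      rw [← h4]
      have : ∀ k, (A i0 k : ℂ) * v k = (A i0 k : ℂ) * ((M : ℂ) / u) := fun k => by
        rw [hvconst k]
      rw [Finset.sum_congr rfl (fun k _ => this k), ← Finset.sum_mul]
      norm_cast
      rw [hrow, Complex.ofReal_one, one_mul]
    exact hlam (mul_right_cancel₀ hcne (by rw [hfin, one_mul]))
/-- Spectral properties of the Jacobian of the Sinkhorn map `F`: the eigenvalue `1`
has a one-dimensional eigenspace (equivalently, algebraic multiplicity `1`, since the
matrix is diagonalizable over `ℝ`), and every complex eigenvalue `λ ≠ 1` satisfies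
`|λ| < 1`. -/
theorem sinkhorn_jacobian_spectrum
    (n m : ℕ) (hn : 0 < n) (hm : 0 < m)
    (a : Fin n → ℝ) (b : Fin m → ℝ) (K : Matrix (Fin n) (Fin m) ℝ)
    (ha_pos : ∀ i, 0 < a i) (ha_sum : ∑ i, a i = 1)
    (hb_pos : ∀ j, 0 < b j) (hb_sum : ∑ j, b j = 1)
    (hK_pos : ∀ i j, 0 < K i j)
    (F : (Fin n → ℝ) → Fin n → ℝ)
    (hF : ∀ x i, F x i = Real.log (a i) -
      Real.log (∑ j, K i j * (b j / ∑ i', K i' j * Real.exp (x i'))))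
    (J : (Fin n → ℝ) → Matrix (Fin n) (Fin n) ℝ)
    (hJ : ∀ x j i, J x j i = fderiv ℝ F x (Pi.single i 1) j) :
    ∀ x : Fin n → ℝ,
      (Module.finrank ℝ
        (Module.End.eigenspace (Matrix.mulVecLin (J x)) (1 : ℝ)) = 1) ∧
      (∀ lam : ℂ, lam ≠ 1 →
        (∃ v : Fin n → ℂ, v ≠ 0 ∧
          ((J x).map (fun r => (r : ℂ))).mulVec v = lam • v) →
        ‖lam‖ < 1) := by
  intro x
  classical
  set S : Fin m → ℝ := fun l => ∑ i', K i' l * Real.exp (x i') with hSdef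
  have hSpos : ∀ l, 0 < S l := fun l =>
    Finset.sum_pos (fun i _ => mul_pos (hK_pos i l) (Real.exp_pos _))
      ⟨⟨0, hn⟩, Finset.mem_univ _⟩
  set G : Fin n → ℝ := fun i => ∑ l, K i l * (b l / S l) with hGdef
  have hGpos : ∀ i, 0 < G i := fun i =>
    Finset.sum_pos (fun l _ => mul_pos (hK_pos i l) (div_pos (hb_pos l) (hSpos l)))
      ⟨⟨0, hm⟩, Finset.mem_univ _⟩
  set D : Fin m → ((Fin n → ℝ) →L[ℝ] ℝ) := fun l =>
    ∑ i', (K i' l * Real.exp (x i')) • ContinuousLinearMap.proj i' with hDdef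
  set DG : Fin n → ((Fin n → ℝ) →L[ℝ] ℝ) := fun i =>
    ∑ l, (K i l) • ((b l) • ((-(S l ^ 2)⁻¹) • D l)) with hDGdef
  set L : Fin n → ((Fin n → ℝ) →L[ℝ] ℝ) := fun i => -((G i)⁻¹ • DG i) with hLdef
  have hSder : ∀ l, HasFDerivAt (fun y : Fin n → ℝ => ∑ i', K i' l * Real.exp (y i'))
      (D l) x := by
    intro l
    rw [hDdef]
    apply HasFDerivAt.fun_sum
    intro i' _
    have h1 : HasFDerivAt (fun y : Fin n → ℝ => y i')
        (ContinuousLinearMap.proj i' : (Fin n → ℝ) →L[ℝ] ℝ) x :=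
      (ContinuousLinearMap.proj i' : (Fin n → ℝ) →L[ℝ] ℝ).hasFDerivAt
    have h2 := (Real.hasDerivAt_exp (x i')).comp_hasFDerivAt x h1
    have h3 := h2.const_mul (K i' l)
    rw [smul_smul] at h3
    exact h3
  have hGder : ∀ i, HasFDerivAt
      (fun y : Fin n → ℝ => ∑ l, K i l * (b l / ∑ i', K i' l * Real.exp (y i')))
      (DG i) x := by
    intro i
    rw [hDGdef]
    apply HasFDerivAt.fun_sum
    intro l _
    have hinv : HasFDerivAt (fun y : Fin n → ℝ => (∑ i', K i' l * Real.exp (y i'))⁻¹)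
        ((-(S l ^ 2)⁻¹) • D l) x :=
      (hasDerivAt_inv (hSpos l).ne').comp_hasFDerivAt x (hSder l)
    have hgl := (hinv.const_mul (b l)).const_mul (K i l)
    have hfe : (fun y : Fin n → ℝ => K i l * (b l / ∑ i', K i' l * Real.exp (y i')))
        = fun y : Fin n → ℝ => K i l * (b l * (∑ i', K i' l * Real.exp (y i'))⁻¹) := by
      funext y; rw [div_eq_mul_inv]
    rw [hfe]
    exact hgl
  have hFi : ∀ i, HasFDerivAt
      (fun y : Fin n → ℝ => Real.log (a i) -
        Real.log (∑ l, K i l * (b l / ∑ i', K i' l * Real.exp (y i')))) (L i) x := by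
    intro i
    have hlog := (Real.hasDerivAt_log (hGpos i).ne').comp_hasFDerivAt x (hGder i)
    exact hlog.const_sub (Real.log (a i))
  have hFder : HasFDerivAt F (ContinuousLinearMap.pi L) x := by
    have hFeq : F = fun (y : Fin n → ℝ) (i : Fin n) => Real.log (a i) -
        Real.log (∑ l, K i l * (b l / ∑ i', K i' l * Real.exp (y i'))) :=
      funext fun y => funext fun i => hF y i
    rw [hFeq]
    exact hasFDerivAt_pi.mpr hFi
  have hfd : fderiv ℝ F x = ContinuousLinearMap.pi L := hFder.fderiv
  set E : Matrix (Fin n) (Fin n) ℝ := fun j i =>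
    (G j)⁻¹ * ∑ l, K j l * b l / S l ^ 2 * (K i l * Real.exp (x i)) with hEdef
  have hDapp : ∀ l i, D l (Pi.single i 1) = K i l * Real.exp (x i) := by
    intro l i
    rw [hDdef]
    simp only [ContinuousLinearMap.sum_apply, ContinuousLinearMap.smul_apply,
      ContinuousLinearMap.proj_apply, Pi.single_apply, smul_eq_mul, mul_ite, mul_one, mul_zero]
    rw [Finset.sum_ite_eq' Finset.univ i (fun i' => K i' l * Real.exp (x i'))]
    simp
  have hJE : J x = E := by
    funext j i
    rw [hJ, hfd]
    have happ : (ContinuousLinearMap.pi L) (Pi.single i 1) j = L j (Pi.single i 1) := rfl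
    rw [happ, hLdef]
    simp only [ContinuousLinearMap.neg_apply, ContinuousLinearMap.smul_apply, hDGdef,
      ContinuousLinearMap.sum_apply, hDapp, smul_eq_mul, hEdef]
    rw [neg_mul_eq_mul_neg, ← Finset.sum_neg_distrib]
    congr 1
    refine Finset.sum_congr rfl fun l _ => ?_
    have hne := (hSpos l).ne'
    field_simp
  have hEpos : ∀ j i, 0 < E j i := by
    intro j i
    rw [hEdef]
    apply mul_pos (inv_pos.mpr (hGpos j))
    apply Finset.sum_pos _ ⟨⟨0, hm⟩, Finset.mem_univ _⟩
    intro l _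
    exact mul_pos (div_pos (mul_pos (hK_pos j l) (hb_pos l)) (pow_pos (hSpos l) 2))
      (mul_pos (hK_pos i l) (Real.exp_pos _))
  have hErow : ∀ j, ∑ i, E j i = 1 := by
    intro j
    have h1 : ∑ i, E j i = (G j)⁻¹ * ∑ l, K j l * (b l / S l) := by
      rw [hEdef]
      rw [← Finset.mul_sum]
      congr 1
      rw [Finset.sum_comm]
      refine Finset.sum_congr rfl fun l _ => ?_
      rw [← Finset.mul_sum]
      have hSl : (∑ i, K i l * Real.exp (x i)) = S l := rfl
      rw [hSl]
      have hne := (hSpos l).ne'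
      field_simp
    rw [h1]
    have h2 : (∑ l, K j l * (b l / S l)) = G j := rfl
    rw [h2, inv_mul_cancel₀ (hGpos j).ne']
  rw [hJE]
  exact pf_stochastic n hn E hEpos hErow
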